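/- Let (X_i, Y_{i1}, Y_{i2}), i = 1,...,n, be i.i.d. copies of a triple (X, Y_1, Y_2) satisfying condition (G1), and for j ∈ {1,2} let F̂_{n,j} be estimators of the conditional margins (measurable functions of the sample and of (y,x)) satisfying conditions (H1), (H2) and (H3). Let Ĝ_{n,j}(u) = n^{−1} Σ_{i=1}^n 1{F̂_{n,j}(Y_{ij}|X_i) ≤ u} and let Ĝ^{(or)}_{n,j}(u) = n^{−1} Σ_{i=1}^n 1{F_j(Y_{ij}|X_i) ≤ u}. Then for each j ∈ {1,2} and each γ ∈ (0,1/2), sup_{u ∈ [γ,1−γ]} | Ĝ_{n,j}(u) − Ĝ^{(or)}_{n,j}(u) | = o_P(n^{−1/4}) as n → ∞. -/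

import Mathlib

open MeasureTheory ProbabilityTheory Filter Set Topology

noncomputable section

/-- Generalized inverse `F⁻(u) = inf { y : F y ≥ u }`. -/
def genInv (F : ℝ → ℝ) (u : ℝ) : ℝ := sInf {y : ℝ | u ≤ F y}

/-- The Hölder regularity class `C_{k+δ,M}(S)`: `k` times differentiable, all
derivatives up to order `k` (including the function) bounded by `M`, and the
order-`k` derivative `δ`-Hölder with constant `M`. -/
def HClass {E : Type*} [NormedAddCommGroup E] [NormedSpace ℝ E]
    (k : ℕ) (δ M : ℝ) (S : Set E) (f : E → ℝ) : Prop :=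
  ContDiffOn ℝ k f S ∧
  (∀ l : ℕ, l ≤ k → ∀ z ∈ S, ‖iteratedFDerivWithin ℝ l f S z‖ ≤ M) ∧
  ∀ z ∈ S, ∀ z' ∈ S,
    ‖iteratedFDerivWithin ℝ k f S z - iteratedFDerivWithin ℝ k f S z'‖ ≤ M * ‖z - z'‖ ^ δ

/-- Basic kernel requirements of (G3): bounded, nonnegative, symmetric,
supported in `(-1,1)`, integrating to one. -/
def KernelBase (K : ℝ → ℝ) : Prop :=
  (∃ C, ∀ u, K u ≤ C) ∧ (∀ u, 0 ≤ K u) ∧ (∀ u, K (-u) = K u) ∧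
  (∀ u, u ∉ Set.Ioo (-1 : ℝ) 1 → K u = 0) ∧ (∫ u, K u) = 1

/-- (G3) requirements on the kernel `L`. -/
def KernelCondL (L : ℝ → ℝ) : Prop :=
  KernelBase L ∧ ContDiff ℝ 1 L ∧ (∃ C, ∀ u, |deriv L u| ≤ C) ∧
  BoundedVariationOn (deriv L) Set.univ

/-- (G3) requirements on the kernel `K`. -/
def KernelCondK (K : ℝ → ℝ) : Prop :=
  KernelBase K ∧ ContDiff ℝ 2 K ∧ (∃ C, ∀ u, |deriv (deriv K) u| ≤ C) ∧
  BoundedVariationOn (deriv (deriv K)) Set.univ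

/-- `φ_h(y, Y) = ∫_{-∞}^y h⁻¹ L((t-Y)/h) dt`. -/
def phiSm (L : ℝ → ℝ) (h y Y : ℝ) : ℝ := ∫ t in Set.Iic y, h⁻¹ * L ((t - Y) / h)

/-- `w_k(u) = u^k K(u)`. -/
def wk (K : ℝ → ℝ) (k : ℕ) (u : ℝ) : ℝ := u ^ k * K u

/-- `p̂_{n,k}(x)`. -/
def phat {Ω : Type*} (K : ℝ → ℝ) (h1 : ℕ → ℝ) (X : ℕ → Ω → ℝ)
    (n k : ℕ) (x : ℝ) (ω : Ω) : ℝ :=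
  (n : ℝ)⁻¹ * ∑ i ∈ Finset.range n, (h1 n)⁻¹ * wk K k ((x - X i ω) / h1 n)

/-- `Q̂_{n,k}(y,x)`. -/
def Qhat {Ω : Type*} (K L : ℝ → ℝ) (h1 h2 : ℕ → ℝ) (X Y : ℕ → Ω → ℝ)
    (n k : ℕ) (y x : ℝ) (ω : Ω) : ℝ :=
  (n : ℝ)⁻¹ * ∑ i ∈ Finset.range n,
    phiSm L (h2 n) y (Y i ω) * ((h1 n)⁻¹ * wk K k ((x - X i ω) / h1 n))

/-- The smoothed local linear estimator `F̂_n(y|x)` in closed form. -/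
def Fhat {Ω : Type*} (K L : ℝ → ℝ) (h1 h2 : ℕ → ℝ) (X Y : ℕ → Ω → ℝ)
    (n : ℕ) (y x : ℝ) (ω : Ω) : ℝ :=
  (Qhat K L h1 h2 X Y n 0 y x ω * phat K h1 X n 2 x ω
      - Qhat K L h1 h2 X Y n 1 y x ω * phat K h1 X n 1 x ω) /
    (phat K h1 X n 0 x ω * phat K h1 X n 2 x ω - (phat K h1 X n 1 x ω) ^ 2)

/-- Bandwidth conditions (G4'). -/
structure BandG4' (h1 h2 : ℕ → ℝ) : Prop where
  pos1 : ∀ n, 0 < h1 n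
  pos2 : ∀ n, 0 < h2 n
  to0₁ : Tendsto h1 atTop (𝓝 0)
  to0₂ : Tendsto h2 atTop (𝓝 0)
  r1 : Tendsto (fun n : ℕ => (n : ℝ) * h1 n ^ 3 / |Real.log (h1 n)|) atTop atTop
  r2 : Tendsto (fun n : ℕ => (n : ℝ) * (h1 n * h2 n) / |Real.log (h1 n * h2 n)|) atTop atTop

/-- Bandwidth conditions (G4), for a given `α > 0`. -/
structure BandG4 (h1 h2 : ℕ → ℝ) (α : ℝ) : Prop where
  αpos : 0 < α
  pos1 : ∀ n, 0 < h1 n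
  pos2 : ∀ n, 0 < h2 n
  b1 : Tendsto (fun n : ℕ => (n : ℝ) * h1 n ^ 8) atTop (𝓝 0)
  b2 : Tendsto (fun n : ℕ => (n : ℝ) * h2 n ^ 8) atTop (𝓝 0)
  b3 : Tendsto (fun n => h1 n ^ ((-1 : ℝ) - α / 2) * h2 n ^ 2) atTop (𝓝 0)
  b4 : Tendsto (fun n : ℕ => (n : ℝ) * h1 n ^ ((3 : ℝ) + α) / |Real.log (h1 n)|) atTop atTop
  b5 : Tendsto (fun n : ℕ => (n : ℝ) * h1 n ^ ((1 : ℝ) + α) * h2 n / |Real.log (h1 n * h2 n)|)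
        atTop atTop

/-- Bandwidth conditions (G4''), for a given `α > 0`. -/
structure BandG4'' (h1 h2 : ℕ → ℝ) (α : ℝ) : Prop where
  αpos : 0 < α
  pos1 : ∀ n, 0 < h1 n
  pos2 : ∀ n, 0 < h2 n
  to0₁ : Tendsto h1 atTop (𝓝 0)
  to0₂ : Tendsto h2 atTop (𝓝 0)
  b3 : Tendsto (fun n => h1 n ^ ((-1 : ℝ) - α / 2) * h2 n ^ 2) atTop (𝓝 0)
  b4 : Tendsto (fun n : ℕ => (n : ℝ) * h1 n ^ ((3 : ℝ) + α) / |Real.log (h1 n)|) atTop atTop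
  b5 : Tendsto (fun n : ℕ => (n : ℝ) * h1 n ^ ((1 : ℝ) + α) * h2 n / |Real.log (h1 n * h2 n)|)
        atTop atTop

/-- Marginal density of `X` from a joint density of `(X, Y₁, Y₂)`. -/
def fX3 (fXY : ℝ → ℝ → ℝ → ℝ) (x : ℝ) : ℝ := ∫ p : ℝ × ℝ, fXY x p.1 p.2

/-- Conditional margin `F₁(y|x)` from a joint density of `(X, Y₁, Y₂)`. -/
def F1c (fXY : ℝ → ℝ → ℝ → ℝ) (y x : ℝ) : ℝ :=
  (∫ z in Set.Iic y, ∫ t, fXY x z t) / fX3 fXY x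

/-- Conditional margin `F₂(y|x)` from a joint density of `(X, Y₁, Y₂)`. -/
def F2c (fXY : ℝ → ℝ → ℝ → ℝ) (y x : ℝ) : ℝ :=
  (∫ z in Set.Iic y, ∫ t, fXY x t z) / fX3 fXY x

/-- Conditional marginal density `f₁(y|x)`. -/
def f1c (fXY : ℝ → ℝ → ℝ → ℝ) (y x : ℝ) : ℝ := (∫ t, fXY x y t) / fX3 fXY x

/-- Conditional marginal density `f₂(y|x)`. -/
def f2c (fXY : ℝ → ℝ → ℝ → ℝ) (y x : ℝ) : ℝ := (∫ t, fXY x t y) / fX3 fXY x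

/-- Condition (G1) on the law of the triple `(X, Y₁, Y₂)`, described through
its joint density `fXY` on `S_X × ℝ²`, `S_X = (s0, s1)`. -/
structure CondG1T (fXY : ℝ → ℝ → ℝ → ℝ) (s0 s1 b M δ : ℝ) : Prop where
  hs : s0 < s1
  hb : 0 < b
  hM : 0 < M
  hδ0 : 0 < δ
  hδ1 : δ ≤ 1
  nonneg : ∀ x y1 y2, 0 ≤ fXY x y1 y2
  supp : ∀ x y1 y2, x ∉ Set.Ioo s0 s1 → fXY x y1 y2 = 0
  F1reg : HClass 3 δ M (Set.univ ×ˢ Set.Ioo s0 s1) (fun p : ℝ × ℝ => F1c fXY p.1 p.2)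
  F2reg : HClass 3 δ M (Set.univ ×ˢ Set.Ioo s0 s1) (fun p : ℝ × ℝ => F2c fXY p.1 p.2)
  fXreg : HClass 1 1 M (Set.Ioo s0 s1) (fX3 fXY)
  fXlb : ∀ x ∈ Set.Ioo s0 s1, b ≤ fX3 fXY x
  f1lb : ∀ γ ∈ Set.Ioo (0 : ℝ) (1 / 2), ∃ bγ > (0 : ℝ), ∀ x ∈ Set.Ioo s0 s1,
    ∀ y ∈ Set.Icc (genInv (fun z => F1c fXY z x) γ) (genInv (fun z => F1c fXY z x) (1 - γ)),
      bγ ≤ f1c fXY y x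
  f2lb : ∀ γ ∈ Set.Ioo (0 : ℝ) (1 / 2), ∃ bγ > (0 : ℝ), ∀ x ∈ Set.Ioo s0 s1,
    ∀ y ∈ Set.Icc (genInv (fun z => F2c fXY z x) γ) (genInv (fun z => F2c fXY z x) (1 - γ)),
      bγ ≤ f2c fXY y x

/-- The data `(X_i, Y_{i1}, Y_{i2})` are i.i.d. with common law of density `fXY`. -/
structure IIDLaw3 {Ω : Type*} [MeasurableSpace Ω] (P : Measure Ω)
    (X Y1 Y2 : ℕ → Ω → ℝ) (fXY : ℝ → ℝ → ℝ → ℝ) : Prop where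
  measX : ∀ i, Measurable (X i)
  measY1 : ∀ i, Measurable (Y1 i)
  measY2 : ∀ i, Measurable (Y2 i)
  indep : iIndepFun (fun i ω => (X i ω, Y1 i ω, Y2 i ω)) P
  ident : ∀ i, IdentDistrib (fun ω => (X i ω, Y1 i ω, Y2 i ω))
    (fun ω => (X 0 ω, Y1 0 ω, Y2 0 ω)) P P
  law : Measure.map (fun ω => (X 0 ω, Y1 0 ω, Y2 0 ω)) P
    = (volume : Measure (ℝ × ℝ × ℝ)).withDensity
        (fun p => ENNReal.ofReal (fXY p.1 p.2.1 p.2.2))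

/-- The (common) conditional copula,
`C(u₁,u₂) = P(F₁(Y₁|X) ≤ u₁, F₂(Y₂|X) ≤ u₂)`. -/
def copC {Ω : Type*} [MeasurableSpace Ω] (P : Measure Ω)
    (X Y1 Y2 : ℕ → Ω → ℝ) (fXY : ℝ → ℝ → ℝ → ℝ) (u : ℝ × ℝ) : ℝ :=
  (P {ω | F1c fXY (Y1 0 ω) (X 0 ω) ≤ u.1 ∧ F2c fXY (Y2 0 ω) (X 0 ω) ≤ u.2}).toReal

/-- Standard basis of `ℝ²`, used to express partial derivatives. -/
def bas2 : Fin 2 → ℝ × ℝ := ![((1 : ℝ), (0 : ℝ)), ((0 : ℝ), (1 : ℝ))]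

/-- Coordinates of a point of `ℝ²`. -/
def coord2 (p : ℝ × ℝ) : Fin 2 → ℝ := ![p.1, p.2]

/-- Condition (G2) on a copula `C` : twice continuously differentiable on the
open unit square with the weighted bound on its second-order partial
derivatives. -/
def CopulaG2 (C : ℝ × ℝ → ℝ) : Prop :=
  ContDiffOn ℝ 2 C (Set.Ioo 0 1 ×ˢ Set.Ioo 0 1) ∧
  ∃ κ > (0 : ℝ), ∀ p ∈ Set.Ioo (0 : ℝ) 1 ×ˢ Set.Ioo (0 : ℝ) 1, ∀ j k : Fin 2,
    |fderiv ℝ (fun q => fderiv ℝ C q (bas2 j)) p (bas2 k)| ≤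
      κ / Real.sqrt (coord2 p j * (1 - coord2 p j) * (coord2 p k * (1 - coord2 p k)))

/-- Empirical (marginal) distribution function `Ĝ_{n}` of the pseudo
observations built from a (possibly estimated) conditional margin `Fh`. -/
def Ghat {Ω : Type*} (Fh : ℕ → ℝ → ℝ → Ω → ℝ) (X Yj : ℕ → Ω → ℝ)
    (n : ℕ) (u : ℝ) (ω : Ω) : ℝ :=
  (n : ℝ)⁻¹ * ∑ i ∈ Finset.range n, if Fh n (Yj i ω) (X i ω) ω ≤ u then (1 : ℝ) else 0

/-- The empirical conditional copula `Ĉ_n` built from (possibly estimated)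
conditional margins `Fh1`, `Fh2`. -/
def Chat {Ω : Type*} (Fh1 Fh2 : ℕ → ℝ → ℝ → Ω → ℝ) (X Y1 Y2 : ℕ → Ω → ℝ)
    (n : ℕ) (u1 u2 : ℝ) (ω : Ω) : ℝ :=
  (n : ℝ)⁻¹ * ∑ i ∈ Finset.range n,
    (if Fh1 n (Y1 i ω) (X i ω) ω ≤ genInv (fun v => Ghat Fh1 X Y1 n v ω) u1
      then (1 : ℝ) else 0) *
    (if Fh2 n (Y2 i ω) (X i ω) ω ≤ genInv (fun v => Ghat Fh2 X Y2 n v ω) u2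
      then (1 : ℝ) else 0)

/-- Condition (H1) for an estimator `Fh` of the conditional margin `F`. -/
def CondH1 {Ω : Type*} [MeasurableSpace Ω] (P : Measure Ω) (s0 s1 : ℝ)
    (F : ℝ → ℝ → ℝ) (Fh : ℕ → ℝ → ℝ → Ω → ℝ) : Prop :=
  ∀ γ ∈ Set.Ioo (0 : ℝ) (1 / 2),
    Tendsto (fun n => P {ω | ∀ x ∈ Set.Ioo s0 s1,
        Continuous (fun y => Fh n y x ω) ∧
        StrictMonoOn (fun y => Fh n y x ω)
          (Set.Icc (genInv (fun z => F z x) γ) (genInv (fun z => F z x) (1 - γ)))})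
      atTop (𝓝 1)

/-- Condition (H2) for an estimator `Fh` of the conditional margin `F`:
`sup_{x ∈ S_X, y ∈ ℝ} |F̂_{n}(y|x) - F(y|x)| = o_P(n^{-1/4})`. -/
def CondH2 {Ω : Type*} [MeasurableSpace Ω] (P : Measure Ω) (s0 s1 : ℝ)
    (F : ℝ → ℝ → ℝ) (Fh : ℕ → ℝ → ℝ → Ω → ℝ) : Prop :=
  ∀ ε > (0 : ℝ),
    Tendsto (fun n : ℕ => P {ω | ∃ x ∈ Set.Ioo s0 s1, ∃ y : ℝ,
        ε * (n : ℝ) ^ (-(1 / 4) : ℝ) < |Fh n y x ω - F y x|})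
      atTop (𝓝 0)

/-- Condition (H3) for an estimator `Fh` of a conditional margin. -/
def CondH3 {Ω : Type*} [MeasurableSpace Ω] (P : Measure Ω) (s0 s1 : ℝ)
    (Fh : ℕ → ℝ → ℝ → Ω → ℝ) : Prop :=
  ∀ γ ∈ Set.Ioo (0 : ℝ) (1 / 2), ∃ δ₁ > (0 : ℝ), ∃ M₁ > (0 : ℝ),
    Tendsto (fun n => P {ω | ∀ u ∈ Set.Icc γ (1 - γ),
        HClass 1 δ₁ M₁ (Set.Ioo s0 s1) (fun x => genInv (fun y => Fh n y x ω) u)})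
      atTop (𝓝 1)

section St18Aux
open scoped ENNReal NNReal


open Classical in
/-- A function continuous on an open set, extended by 0, is measurable. -/
lemma st18_meas_if {f : ℝ × ℝ → ℝ} {U : Set (ℝ × ℝ)} (hU : IsOpen U)
    (hf : ContinuousOn f U) : Measurable (fun p => if p ∈ U then f p else 0) := by
  apply measurable_of_isOpen
  intro s hs
  have h1 : IsOpen (U ∩ f ⁻¹' s) := hf.isOpen_inter_preimage hU hs
  by_cases h0 : (0 : ℝ) ∈ s
  · have : (fun p => if p ∈ U then f p else 0) ⁻¹' s = (U ∩ f ⁻¹' s) ∪ Uᶜ := by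
      ext p; by_cases hp : p ∈ U <;> simp [hp, h0]
    rw [this]
    exact h1.measurableSet.union hU.measurableSet.compl
  · have : (fun p => if p ∈ U then f p else 0) ⁻¹' s = U ∩ f ⁻¹' s := by
      ext p; by_cases hp : p ∈ U <;> simp [hp, h0]
    rw [this]; exact h1.measurableSet

/-- Stieltjes-type bound: the mass of `h` on the set where the normalized
primitive lies in `(a, b]` is at most `(b-a) * c`. -/
lemma st18_stieltjes (h : ℝ → ℝ) (hint : Integrable h) (hnn : ∀ y, 0 ≤ h y)
    (Fc : ℝ → ℝ) (hFcont : Continuous Fc) (c : ℝ) (hc : 0 < c)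
    (hrepr : ∀ y, ∫ z in Iic y, h z = Fc y * c) (htot : ∫ z, h z = c)
    (a b : ℝ) (ha : 0 < a) (hab : a ≤ b) (hb : b < 1) :
    ∫ y in {y | a < Fc y ∧ Fc y ≤ b}, h y ≤ (b - a) * c := by
  have hnn' : (0:ℝ→ℝ) ≤ᵐ[volume] h := Filter.Eventually.of_forall hnn
  -- monotonicity of Fc
  have hFmono : Monotone Fc := by
    intro y y' hy
    have h1 : ∫ z in Iic y, h z ≤ ∫ z in Iic y', h z := by
      apply setIntegral_mono_set hint.integrableOn (ae_restrict_of_ae hnn')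
      exact Filter.Eventually.of_forall (Iic_subset_Iic.2 hy)
    rw [hrepr y, hrepr y'] at h1
    exact le_of_mul_le_mul_right h1 hc
  -- there is a point with Fc > b
  have hIic_mono : Monotone (fun n : ℕ => Iic ((n:ℝ))) := fun m n hmn =>
    Iic_subset_Iic.2 (by exact_mod_cast hmn)
  have hiU : (⋃ n : ℕ, Iic ((n:ℝ))) = univ := by
    ext x; simp only [mem_iUnion, mem_Iic, mem_univ, iff_true]
    obtain ⟨n, hn⟩ := exists_nat_ge x; exact ⟨n, hn⟩
  have htend : Tendsto (fun n : ℕ => ∫ z in Iic ((n:ℝ)), h z) atTop (𝓝 c) := by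
    have := tendsto_setIntegral_of_monotone (μ := volume) (f := h)
      (fun n : ℕ => measurableSet_Iic) hIic_mono (by rw [hiU]; exact hint.integrableOn)
    rw [hiU] at this; simpa [htot] using this
  obtain ⟨nb, hnb⟩ : ∃ n : ℕ, b * c < ∫ z in Iic ((n:ℝ)), h z := by
    have hbc : b * c < c := by nlinarith
    rcases (htend.eventually (eventually_gt_nhds hbc)).exists with ⟨n, hn⟩
    exact ⟨n, hn⟩
  set yb : ℝ := (nb : ℝ)
  have hyb : b < Fc yb := by
    have := hrepr yb; rw [this] at hnb
    exact lt_of_mul_lt_mul_right hnb hc.le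
  -- there is a point with Fc < a
  have htend2 : Tendsto (fun n : ℕ => ∫ z in Iic (-(n:ℝ)), h z) atTop (𝓝 0) := by
    have hIoi_mono : Monotone (fun n : ℕ => Ioi (-(n:ℝ))) := fun m n hmn =>
      Ioi_subset_Ioi (by exact_mod_cast neg_le_neg (Nat.cast_le.2 hmn))
    have hiU2 : (⋃ n : ℕ, Ioi (-(n:ℝ))) = univ := by
      ext x; simp only [mem_iUnion, mem_Ioi, mem_univ, iff_true]
      obtain ⟨n, hn⟩ := exists_nat_gt (-x); exact ⟨n, by linarith⟩
    have h2 := tendsto_setIntegral_of_monotone (μ := volume) (f := h)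
      (fun n : ℕ => measurableSet_Ioi) hIoi_mono (by rw [hiU2]; exact hint.integrableOn)
    rw [hiU2] at h2
    have hsplit : ∀ n : ℕ, ∫ z in Iic (-(n:ℝ)), h z = c - ∫ z in Ioi (-(n:ℝ)), h z := by
      intro n
      have hu : (∫ z in Iic (-(n:ℝ)), h z) + ∫ z in Ioi (-(n:ℝ)), h z = c := by
        rw [← htot, ← setIntegral_union (Iic_disjoint_Ioi le_rfl) measurableSet_Ioi
          hint.integrableOn hint.integrableOn, Iic_union_Ioi, setIntegral_univ]
      linarith
    simp only [hsplit]
    have : Tendsto (fun n : ℕ => c - ∫ z in Ioi (-(n:ℝ)), h z) atTop (𝓝 (c - ∫ z, h z)) :=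
      (tendsto_const_nhds.sub (by simpa using h2))
    simpa [htot] using this
  obtain ⟨na, hna⟩ : ∃ n : ℕ, ∫ z in Iic (-(n:ℝ)), h z < a * c := by
    have hac : 0 < a * c := mul_pos ha hc
    rcases (htend2.eventually (eventually_lt_nhds hac)).exists with ⟨n, hn⟩
    exact ⟨n, hn⟩
  set ya : ℝ := -(na : ℝ)
  have hya : Fc ya < a := by
    have := hrepr ya; rw [this] at hna
    exact lt_of_mul_lt_mul_right hna hc.le
  -- sSup points
  have hclosedA : IsClosed {y | Fc y ≤ a} := isClosed_le hFcont continuous_const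
  have hclosedB : IsClosed {y | Fc y ≤ b} := isClosed_le hFcont continuous_const
  have hneA : {y | Fc y ≤ a}.Nonempty := ⟨ya, hya.le⟩
  have hneB : {y | Fc y ≤ b}.Nonempty := ⟨ya, by simp only [mem_setOf_eq]; linarith⟩
  have hbddB : BddAbove {y | Fc y ≤ b} := by
    refine ⟨yb, fun y hy => ?_⟩
    by_contra hlt
    push_neg at hlt
    exact absurd (hFmono hlt.le) (by simp only [mem_setOf_eq] at hy; intro hF; linarith)
  have hbddA : BddAbove {y | Fc y ≤ a} :=
    hbddB.mono (fun y hy => by simp only [mem_setOf_eq] at *; linarith)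
  set c' := sSup {y | Fc y ≤ a}
  set d' := sSup {y | Fc y ≤ b}
  have hc'mem : c' ∈ {y | Fc y ≤ a} := hclosedA.csSup_mem hneA hbddA
  have hd'mem : d' ∈ {y | Fc y ≤ b} := hclosedB.csSup_mem hneB hbddB
  have hcd : c' ≤ d' := csSup_le_csSup hbddB hneA (fun y hy => by
    simp only [mem_setOf_eq] at *; linarith)
  -- value of Fc at c' : need Fc c' = a via IVT
  have hyab : ya ≤ yb := by
    by_contra hlt; push_neg at hlt
    have := hFmono hlt.le; linarith
  obtain ⟨cA, _, hcA⟩ : ∃ x ∈ Icc ya yb, Fc x = a := by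
    have := intermediate_value_Icc hyab hFcont.continuousOn
    have hmem : a ∈ Icc (Fc ya) (Fc yb) := ⟨hya.le, by linarith⟩
    obtain ⟨x, hx, hfx⟩ := this hmem; exact ⟨x, hx, hfx⟩
  obtain ⟨cB, _, hcB⟩ : ∃ x ∈ Icc ya yb, Fc x = b := by
    have := intermediate_value_Icc hyab hFcont.continuousOn
    have hmem : b ∈ Icc (Fc ya) (Fc yb) := ⟨by linarith, hyb.le⟩
    obtain ⟨x, hx, hfx⟩ := this hmem; exact ⟨x, hx, hfx⟩
  have hFc' : Fc c' = a :=
    le_antisymm hc'mem (hcA ▸ hFmono (le_csSup hbddA (by simp [mem_setOf_eq, hcA.le])))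
  have hFd' : Fc d' = b :=
    le_antisymm hd'mem (hcB ▸ hFmono (le_csSup hbddB (by simp [mem_setOf_eq, hcB.le])))
  -- J ⊆ Ioc c' d'
  have hJsub : {y | a < Fc y ∧ Fc y ≤ b} ⊆ Ioc c' d' := by
    intro y hy
    obtain ⟨hy1, hy2⟩ := hy
    constructor
    · by_contra hle; push_neg at hle
      have := hFmono hle; rw [hFc'] at this; linarith
    · exact le_csSup hbddB hy2
  calc ∫ y in {y | a < Fc y ∧ Fc y ≤ b}, h y
      ≤ ∫ y in Ioc c' d', h y := by
        apply setIntegral_mono_set hint.integrableOn (ae_restrict_of_ae hnn')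
        exact Filter.Eventually.of_forall hJsub
    _ = (∫ y in Iic d', h y) - ∫ y in Iic c', h y := by
        have hu : (∫ y in Iic c', h y) + ∫ y in Ioc c' d', h y = ∫ y in Iic d', h y := by
          rw [← setIntegral_union (Iic_disjoint_Ioc le_rfl) measurableSet_Ioc
            hint.integrableOn hint.integrableOn, Iic_union_Ioc_eq_Iic hcd]
        linarith
    _ = (b - a) * c := by rw [hrepr, hrepr, hFc', hFd']; ring

/-- ℝ≥0∞ version of the Stieltjes bound for a dominated kernel. -/
lemma st18_lipcore (d : ℝ × ℝ → ℝ) (hd : Integrable d (volume : Measure (ℝ × ℝ)))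
    (hnn : ∀ p, 0 ≤ d p)
    (G : ℝ → ℝ≥0∞) (hG : ∀ y, G y ≤ ∫⁻ t, ENNReal.ofReal (d (y, t)))
    (Fc : ℝ → ℝ) (hFcont : Continuous Fc) (c : ℝ) (hc : 0 < c)
    (hrepr : ∀ y, ∫ z in Iic y, (∫ t, d (z, t)) = Fc y * c) (htot : ∫ p, d p = c)
    (a b : ℝ) (ha : 0 < a) (hab : a ≤ b) (hb : b < 1) :
    ∫⁻ y in {y | a < Fc y ∧ Fc y ≤ b}, G y ≤ ENNReal.ofReal ((b - a) * c) := by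
  have hdprod : Integrable d ((volume : Measure ℝ).prod (volume : Measure ℝ)) := by
    rwa [← Measure.volume_eq_prod]
  set h : ℝ → ℝ := fun y => ∫ t, d (y, t) with hh
  have hint : Integrable h := hdprod.integral_prod_left
  have hnn' : ∀ y, 0 ≤ h y := fun y => integral_nonneg (fun t => hnn _)
  have htot' : ∫ y, h y = c := by
    rw [hh]
    have h2 := integral_integral (f := fun y t => d (y, t)) hdprod
    rw [← Measure.volume_eq_prod] at h2
    simpa [Function.uncurry, htot] using h2
  have hae : ∀ᵐ y : ℝ, G y ≤ ENNReal.ofReal (h y) := by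
    filter_upwards [hdprod.prod_right_ae] with y hy
    calc G y ≤ ∫⁻ t, ENNReal.ofReal (d (y, t)) := hG y
      _ = ENNReal.ofReal (h y) :=
        (ofReal_integral_eq_lintegral_ofReal hy
          (Filter.Eventually.of_forall fun t => hnn _)).symm
  calc ∫⁻ y in {y | a < Fc y ∧ Fc y ≤ b}, G y
      ≤ ∫⁻ y in {y | a < Fc y ∧ Fc y ≤ b}, ENNReal.ofReal (h y) :=
        lintegral_mono_ae (ae_restrict_of_ae hae)
    _ = ENNReal.ofReal (∫ y in {y | a < Fc y ∧ Fc y ≤ b}, h y) :=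
        (ofReal_integral_eq_lintegral_ofReal hint.integrableOn
          (ae_restrict_of_ae (Filter.Eventually.of_forall hnn'))).symm
    _ ≤ ENNReal.ofReal ((b - a) * c) := by
        apply ENNReal.ofReal_le_ofReal
        exact st18_stieltjes h hint hnn' Fc hFcont c hc hrepr htot' a b ha hab hb

open Classical in
/-- Margin-1 mass bound for a dominated measurable sub-density. -/
lemma st18_margin1 (fXY : ℝ → ℝ → ℝ → ℝ) (s0 s1 b M δ : ℝ)
    (hG1 : CondG1T fXY s0 s1 b M δ)
    (g : ℝ × ℝ × ℝ → ℝ≥0∞) (hgmeas : Measurable g)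
    (hgle : ∀ p, g p ≤ ENNReal.ofReal (fXY p.1 p.2.1 p.2.2))
    (W : ℝ → ℝ → ℝ) (hW : Measurable fun p : ℝ × ℝ => W p.1 p.2)
    (hWF : ∀ y x, x ∈ Ioo s0 s1 → W y x = F1c fXY y x)
    (hW0 : ∀ y x, x ∉ Ioo s0 s1 → W y x = 0)
    (u v : ℝ) (ha : 0 < u) (hab : u ≤ v) (hb : v < 1) :
    ∫⁻ p in {p : ℝ × ℝ × ℝ | u < W p.2.1 p.1 ∧ W p.2.1 p.1 ≤ v}, g p
      ≤ ENNReal.ofReal ((v - u) * (M * (s1 - s0))) := by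
  have hWp : Measurable fun p : ℝ × ℝ × ℝ => W p.2.1 p.1 :=
    hW.comp ((measurable_snd.fst).prodMk measurable_fst)
  set S : Set (ℝ × ℝ × ℝ) := {p | u < W p.2.1 p.1 ∧ W p.2.1 p.1 ≤ v} with hS
  have hSmeas : MeasurableSet S :=
    (measurableSet_lt measurable_const hWp).inter (measurableSet_le hWp measurable_const)
  have hind : ∫⁻ p in S, g p = ∫⁻ p, S.indicator g p := (lintegral_indicator hSmeas g).symm
  rw [hind]
  have hvol3 : (volume : Measure (ℝ × ℝ × ℝ)) =
      (volume : Measure ℝ).prod (volume : Measure (ℝ × ℝ)) := Measure.volume_eq_prod ℝ (ℝ × ℝ)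
  have hvol2 : (volume : Measure (ℝ × ℝ)) =
      (volume : Measure ℝ).prod (volume : Measure ℝ) := Measure.volume_eq_prod ℝ ℝ
  have hindmeas : Measurable (S.indicator g) := hgmeas.indicator hSmeas
  have hstep1 : ∫⁻ p, S.indicator g p = ∫⁻ x, ∫⁻ q : ℝ × ℝ, S.indicator g (x, q) := by
    rw [hvol3]
    rw [show (volume : Measure (ℝ × ℝ)) = (volume : Measure ℝ).prod (volume : Measure ℝ)
      from hvol2] at *
    exact lintegral_prod _ (by rw [← hvol3]; exact hindmeas.aemeasurable)
  rw [hstep1]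
  have hstep2 : ∀ x : ℝ, (∫⁻ q : ℝ × ℝ, S.indicator g (x, q))
      = ∫⁻ y, ∫⁻ t, S.indicator g (x, (y, t)) := by
    intro x
    rw [hvol2]
    exact lintegral_prod _ ((hindmeas.comp (measurable_const.prodMk measurable_id)).aemeasurable)
  simp only [hstep2]
  -- bound the inner double integral
  have hbound : ∀ x : ℝ, (∫⁻ y, ∫⁻ t, S.indicator g (x, (y, t)))
      ≤ (Ioo s0 s1).indicator (fun _ => ENNReal.ofReal ((v - u) * M)) x := by
    intro x
    by_cases hx : x ∈ Ioo s0 s1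
    · -- apply lipcore
      have hfxb : b ≤ fX3 fXY x := hG1.fXlb x hx
      have hcpos : 0 < fX3 fXY x := lt_of_lt_of_le hG1.hb hfxb
      have hdint : Integrable (fun q : ℝ × ℝ => fXY x q.1 q.2) := by
        by_contra hni
        have h0 : fX3 fXY x = 0 := by
          rw [fX3]; exact integral_undef hni
        rw [h0] at hcpos; exact lt_irrefl _ hcpos
      set G : ℝ → ℝ≥0∞ := fun y => ∫⁻ t, g (x, y, t) with hGdef
      set Fc : ℝ → ℝ := fun y => F1c fXY y x with hFcdef
      have hFcont : Continuous Fc := by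
        have h1 : ContinuousOn (fun p : ℝ × ℝ => F1c fXY p.1 p.2)
            ((univ : Set ℝ) ×ˢ Ioo s0 s1) := hG1.F1reg.1.continuousOn
        have h2 : Continuous fun y : ℝ => (y, x) :=
          continuous_id.prodMk continuous_const
        have h3 : ContinuousOn Fc univ := by
          apply h1.comp h2.continuousOn
          intro y _
          exact ⟨mem_univ _, hx⟩
        exact continuousOn_univ.mp h3
      have hJeq : {y : ℝ | u < W y x ∧ W y x ≤ v} = {y | u < Fc y ∧ Fc y ≤ v} := by
        ext y; simp only [mem_setOf_eq, hWF y x hx, hFcdef]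
      have hJmeas : MeasurableSet {y : ℝ | u < W y x ∧ W y x ≤ v} := by
        have hWsec : Measurable fun y => W y x :=
          hW.comp (measurable_id.prodMk measurable_const)
        exact (measurableSet_lt measurable_const hWsec).inter
          (measurableSet_le hWsec measurable_const)
      have hptwise : (fun y => ∫⁻ t, S.indicator g (x, (y, t)))
          = ({y : ℝ | u < W y x ∧ W y x ≤ v}).indicator G := by
        funext y
        by_cases hy : u < W y x ∧ W y x ≤ v
        · have h1 : ∀ t, S.indicator g (x, (y, t)) = g (x, (y, t)) := fun t =>
            Set.indicator_of_mem (by exact hy) g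
          have hy' : y ∈ {y : ℝ | u < W y x ∧ W y x ≤ v} := hy
          simp only [h1, Set.indicator_of_mem hy', hGdef]
        · have h1 : ∀ t, S.indicator g (x, (y, t)) = 0 := fun t =>
            Set.indicator_of_notMem (by exact hy) g
          have hy' : y ∉ {y : ℝ | u < W y x ∧ W y x ≤ v} := hy
          simp only [h1, lintegral_zero, Set.indicator_of_notMem hy']
      rw [hptwise, lintegral_indicator hJmeas, hJeq]
      have hcore := st18_lipcore (fun q : ℝ × ℝ => fXY x q.1 q.2) hdint
        (fun q => hG1.nonneg x q.1 q.2) G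
        (fun y => lintegral_mono fun t => hgle (x, (y, t)))
        Fc hFcont (fX3 fXY x) hcpos
        (fun y => by
          rw [hFcdef]
          show ∫ z in Iic y, (∫ t, fXY x z t) = F1c fXY y x * fX3 fXY x
          rw [F1c]
          exact (div_mul_cancel₀ _ hcpos.ne').symm)
        (by rw [fX3]) u v ha hab hb
      refine le_trans hcore ?_
      rw [Set.indicator_of_mem hx]
      apply ENNReal.ofReal_le_ofReal
      have hM : fX3 fXY x ≤ M := by
        have := hG1.fXreg.2.1 0 (by norm_num) x hx
        rw [norm_iteratedFDerivWithin_zero] at this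
        calc fX3 fXY x ≤ |fX3 fXY x| := le_abs_self _
          _ ≤ M := this
      have : 0 ≤ v - u := by linarith
      nlinarith
    · have h1 : ∀ y t : ℝ, S.indicator g (x, (y, t)) = 0 := by
        intro y t
        apply Set.indicator_of_notMem
        intro hmem
        rw [hS] at hmem
        simp only [mem_setOf_eq] at hmem
        rw [hW0 y x hx] at hmem
        linarith [hmem.1]
      simp only [h1, lintegral_zero, Set.indicator_of_notMem hx, le_refl]
  calc (∫⁻ x, ∫⁻ y, ∫⁻ t, S.indicator g (x, (y, t)))
      ≤ ∫⁻ x, (Ioo s0 s1).indicator (fun _ => ENNReal.ofReal ((v - u) * M)) x :=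
        lintegral_mono hbound
    _ = ENNReal.ofReal ((v - u) * M) * volume (Ioo s0 s1) := by
        rw [lintegral_indicator measurableSet_Ioo, setLIntegral_const]
    _ = ENNReal.ofReal ((v - u) * M) * ENNReal.ofReal (s1 - s0) := by
        rw [Real.volume_Ioo]
    _ ≤ ENNReal.ofReal ((v - u) * (M * (s1 - s0))) := by
        rw [← ENNReal.ofReal_mul (by nlinarith [hG1.hM.le] : (0:ℝ) ≤ (v - u) * M)]
        rw [mul_assoc]

open Classical in
/-- Margin-2 mass bound for a dominated measurable sub-density. -/
lemma st18_margin2 (fXY : ℝ → ℝ → ℝ → ℝ) (s0 s1 b M δ : ℝ)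
    (hG1 : CondG1T fXY s0 s1 b M δ)
    (g : ℝ × ℝ × ℝ → ℝ≥0∞) (hgmeas : Measurable g)
    (hgle : ∀ p, g p ≤ ENNReal.ofReal (fXY p.1 p.2.1 p.2.2))
    (W : ℝ → ℝ → ℝ) (hW : Measurable fun p : ℝ × ℝ => W p.1 p.2)
    (hWF : ∀ y x, x ∈ Ioo s0 s1 → W y x = F2c fXY y x)
    (hW0 : ∀ y x, x ∉ Ioo s0 s1 → W y x = 0)
    (u v : ℝ) (ha : 0 < u) (hab : u ≤ v) (hb : v < 1) :
    ∫⁻ p in {p : ℝ × ℝ × ℝ | u < W p.2.2 p.1 ∧ W p.2.2 p.1 ≤ v}, g p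
      ≤ ENNReal.ofReal ((v - u) * (M * (s1 - s0))) := by
  have hWp : Measurable fun p : ℝ × ℝ × ℝ => W p.2.2 p.1 :=
    hW.comp ((measurable_snd.snd).prodMk measurable_fst)
  set S : Set (ℝ × ℝ × ℝ) := {p | u < W p.2.2 p.1 ∧ W p.2.2 p.1 ≤ v} with hS
  have hSmeas : MeasurableSet S :=
    (measurableSet_lt measurable_const hWp).inter (measurableSet_le hWp measurable_const)
  have hind : ∫⁻ p in S, g p = ∫⁻ p, S.indicator g p := (lintegral_indicator hSmeas g).symm
  rw [hind]
  have hvol3 : (volume : Measure (ℝ × ℝ × ℝ)) =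
      (volume : Measure ℝ).prod (volume : Measure (ℝ × ℝ)) := Measure.volume_eq_prod ℝ (ℝ × ℝ)
  have hvol2 : (volume : Measure (ℝ × ℝ)) =
      (volume : Measure ℝ).prod (volume : Measure ℝ) := Measure.volume_eq_prod ℝ ℝ
  have hindmeas : Measurable (S.indicator g) := hgmeas.indicator hSmeas
  have hstep1 : ∫⁻ p, S.indicator g p = ∫⁻ x, ∫⁻ q : ℝ × ℝ, S.indicator g (x, q) := by
    rw [hvol3]
    exact lintegral_prod _ (by rw [← hvol3]; exact hindmeas.aemeasurable)
  rw [hstep1]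
  have hstep2 : ∀ x : ℝ, (∫⁻ q : ℝ × ℝ, S.indicator g (x, q))
      = ∫⁻ t, ∫⁻ y, S.indicator g (x, (y, t)) := by
    intro x
    have hm : AEMeasurable (fun q : ℝ × ℝ => S.indicator g (x, q))
        ((volume : Measure ℝ).prod (volume : Measure ℝ)) := by
      rw [← hvol2]
      exact (hindmeas.comp (measurable_const.prodMk measurable_id)).aemeasurable
    rw [hvol2, lintegral_prod _ hm]
    exact lintegral_lintegral_swap hm
  simp only [hstep2]
  have hbound : ∀ x : ℝ, (∫⁻ t, ∫⁻ y, S.indicator g (x, (y, t)))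
      ≤ (Ioo s0 s1).indicator (fun _ => ENNReal.ofReal ((v - u) * M)) x := by
    intro x
    by_cases hx : x ∈ Ioo s0 s1
    · have hfxb : b ≤ fX3 fXY x := hG1.fXlb x hx
      have hcpos : 0 < fX3 fXY x := lt_of_lt_of_le hG1.hb hfxb
      have hdint : Integrable (fun q : ℝ × ℝ => fXY x q.1 q.2) := by
        by_contra hni
        have h0 : fX3 fXY x = 0 := by
          rw [fX3]; exact integral_undef hni
        rw [h0] at hcpos; exact lt_irrefl _ hcpos
      have hdint2 : Integrable (fun q : ℝ × ℝ => fXY x q.2 q.1) := by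
        rw [hvol2] at hdint ⊢
        exact hdint.swap
      set G : ℝ → ℝ≥0∞ := fun t => ∫⁻ y, g (x, y, t) with hGdef
      set Fc : ℝ → ℝ := fun t => F2c fXY t x with hFcdef
      have hFcont : Continuous Fc := by
        have h1 : ContinuousOn (fun p : ℝ × ℝ => F2c fXY p.1 p.2)
            ((univ : Set ℝ) ×ˢ Ioo s0 s1) := hG1.F2reg.1.continuousOn
        have h2 : Continuous fun t : ℝ => (t, x) :=
          continuous_id.prodMk continuous_const
        have h3 : ContinuousOn Fc univ := by
          apply h1.comp h2.continuousOn
          intro t _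
          exact ⟨mem_univ _, hx⟩
        exact continuousOn_univ.mp h3
      have hJeq : {t : ℝ | u < W t x ∧ W t x ≤ v} = {t | u < Fc t ∧ Fc t ≤ v} := by
        ext t; simp only [mem_setOf_eq, hWF t x hx, hFcdef]
      have hJmeas : MeasurableSet {t : ℝ | u < W t x ∧ W t x ≤ v} := by
        have hWsec : Measurable fun t => W t x :=
          hW.comp (measurable_id.prodMk measurable_const)
        exact (measurableSet_lt measurable_const hWsec).inter
          (measurableSet_le hWsec measurable_const)
      have hptwise : (fun t => ∫⁻ y, S.indicator g (x, (y, t)))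
          = ({t : ℝ | u < W t x ∧ W t x ≤ v}).indicator G := by
        funext t
        by_cases ht : u < W t x ∧ W t x ≤ v
        · have h1 : ∀ y, S.indicator g (x, (y, t)) = g (x, (y, t)) := fun y =>
            Set.indicator_of_mem (by exact ht) g
          have ht' : t ∈ {t : ℝ | u < W t x ∧ W t x ≤ v} := ht
          simp only [h1, Set.indicator_of_mem ht', hGdef]
        · have h1 : ∀ y, S.indicator g (x, (y, t)) = 0 := fun y =>
            Set.indicator_of_notMem (by exact ht) g
          have ht' : t ∉ {t : ℝ | u < W t x ∧ W t x ≤ v} := ht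
          simp only [h1, lintegral_zero, Set.indicator_of_notMem ht']
      rw [hptwise, lintegral_indicator hJmeas, hJeq]
      have hcore := st18_lipcore (fun q : ℝ × ℝ => fXY x q.2 q.1) hdint2
        (fun q => hG1.nonneg x q.2 q.1) G
        (fun t => lintegral_mono fun y => hgle (x, (y, t)))
        Fc hFcont (fX3 fXY x) hcpos
        (fun t => by
          rw [hFcdef]
          show ∫ z in Iic t, (∫ y, fXY x y z) = F2c fXY t x * fX3 fXY x
          rw [F2c]
          exact (div_mul_cancel₀ _ hcpos.ne').symm)
        (by
          have hsw := integral_prod_swap (μ := (volume : Measure ℝ))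
            (ν := (volume : Measure ℝ)) (fun q : ℝ × ℝ => fXY x q.1 q.2)
          rw [← hvol2] at hsw
          show ∫ q : ℝ × ℝ, fXY x q.2 q.1 = fX3 fXY x
          rw [fX3, ← hsw]
          rfl)
        u v ha hab hb
      refine le_trans hcore ?_
      rw [Set.indicator_of_mem hx]
      apply ENNReal.ofReal_le_ofReal
      have hM : fX3 fXY x ≤ M := by
        have := hG1.fXreg.2.1 0 (by norm_num) x hx
        rw [norm_iteratedFDerivWithin_zero] at this
        calc fX3 fXY x ≤ |fX3 fXY x| := le_abs_self _
          _ ≤ M := this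
      have : 0 ≤ v - u := by linarith
      nlinarith
    · have h1 : ∀ y t : ℝ, S.indicator g (x, (y, t)) = 0 := by
        intro y t
        apply Set.indicator_of_notMem
        intro hmem
        rw [hS] at hmem
        simp only [mem_setOf_eq] at hmem
        rw [hW0 t x hx] at hmem
        linarith [hmem.1]
      simp only [h1, lintegral_zero, Set.indicator_of_notMem hx, le_refl]
  calc (∫⁻ x, ∫⁻ t, ∫⁻ y, S.indicator g (x, (y, t)))
      ≤ ∫⁻ x, (Ioo s0 s1).indicator (fun _ => ENNReal.ofReal ((v - u) * M)) x :=
        lintegral_mono hbound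
    _ = ENNReal.ofReal ((v - u) * M) * volume (Ioo s0 s1) := by
        rw [lintegral_indicator measurableSet_Ioo, setLIntegral_const]
    _ = ENNReal.ofReal ((v - u) * M) * ENNReal.ofReal (s1 - s0) := by
        rw [Real.volume_Ioo]
    _ ≤ ENNReal.ofReal ((v - u) * (M * (s1 - s0))) := by
        rw [← ENNReal.ofReal_mul (by nlinarith [hG1.hM.le] : (0:ℝ) ≤ (v - u) * M)]
        rw [mul_assoc]

/-- A probability measure given as `withDensity` of an arbitrary function agrees
with `withDensity` of a measurable minorant on all measurable sets. -/
lemma st18_nu_repr {α : Type*} [MeasurableSpace α] (μ : Measure α) (ν : Measure α)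
    [IsProbabilityMeasure ν] (f : α → ℝ≥0∞) (hν : ν = μ.withDensity f) :
    ∃ g : α → ℝ≥0∞, Measurable g ∧ (∀ p, g p ≤ f p) ∧
      ∀ s, MeasurableSet s → ν s = ∫⁻ p in s, g p ∂μ := by
  obtain ⟨g, hgm, hgle, hgint⟩ := exists_measurable_le_lintegral_eq μ f
  refine ⟨g, hgm, fun p => hgle p, fun s hs => ?_⟩
  have htotν : ν univ = ∫⁻ p, f p ∂μ := by
    rw [hν, withDensity_apply _ MeasurableSet.univ, Measure.restrict_univ]
  have h1 : ∫⁻ p in s, g p ∂μ ≤ ν s := by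
    rw [hν, withDensity_apply _ hs]
    exact lintegral_mono fun p => hgle p
  have h2 : ∫⁻ p in sᶜ, g p ∂μ ≤ ν sᶜ := by
    rw [hν, withDensity_apply _ hs.compl]
    exact lintegral_mono fun p => hgle p
  have hsum : ν s + ν sᶜ = (∫⁻ p in s, g p ∂μ) + ∫⁻ p in sᶜ, g p ∂μ := by
    rw [measure_add_measure_compl hs, lintegral_add_compl g hs, htotν, hgint]
  have hle : ν s ≤ ∫⁻ p in s, g p ∂μ := by
    have h3 : ν s + ν sᶜ ≤ (∫⁻ p in s, g p ∂μ) + ν sᶜ := by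
      rw [hsum]
      exact add_le_add le_rfl h2
    exact (ENNReal.add_le_add_iff_right (measure_ne_top ν sᶜ)).mp h3
  exact le_antisymm hle h1

/-- Lipschitz-type bound for the distribution of the first pseudo-observation. -/
lemma st18_lip1 {Ω : Type*} [MeasurableSpace Ω] (P : Measure Ω) [IsProbabilityMeasure P]
    (X Y1 Y2 : ℕ → Ω → ℝ) (fXY : ℝ → ℝ → ℝ → ℝ) (s0 s1 b M δ : ℝ)
    (hG1 : CondG1T fXY s0 s1 b M δ) (hiid : IIDLaw3 P X Y1 Y2 fXY)
    (W : ℝ → ℝ → ℝ) (hW : Measurable fun p : ℝ × ℝ => W p.1 p.2)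
    (hWF : ∀ y x, x ∈ Ioo s0 s1 → W y x = F1c fXY y x)
    (hW0 : ∀ y x, x ∉ Ioo s0 s1 → W y x = 0)
    (u v : ℝ) (hu : 0 < u) (huv : u ≤ v) (hv : v < 1) :
    P {ω | u < W (Y1 0 ω) (X 0 ω) ∧ W (Y1 0 ω) (X 0 ω) ≤ v}
      ≤ ENNReal.ofReal ((v - u) * (M * (s1 - s0))) := by
  set T : Ω → ℝ × ℝ × ℝ := fun ω => (X 0 ω, Y1 0 ω, Y2 0 ω) with hT
  have hTmeas : Measurable T :=
    (hiid.measX 0).prodMk ((hiid.measY1 0).prodMk (hiid.measY2 0))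
  set ν : Measure (ℝ × ℝ × ℝ) := Measure.map T P with hνdef
  have : IsProbabilityMeasure ν := Measure.isProbabilityMeasure_map hTmeas.aemeasurable
  have hν : ν = (volume : Measure (ℝ × ℝ × ℝ)).withDensity
      (fun p => ENNReal.ofReal (fXY p.1 p.2.1 p.2.2)) := hiid.law
  obtain ⟨g, hgm, hgle, hgs⟩ := st18_nu_repr volume ν _ hν
  have hWp : Measurable fun p : ℝ × ℝ × ℝ => W p.2.1 p.1 :=
    hW.comp ((measurable_snd.fst).prodMk measurable_fst)
  set S : Set (ℝ × ℝ × ℝ) := {p | u < W p.2.1 p.1 ∧ W p.2.1 p.1 ≤ v} with hS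
  have hSmeas : MeasurableSet S :=
    (measurableSet_lt measurable_const hWp).inter (measurableSet_le hWp measurable_const)
  have hpre : {ω | u < W (Y1 0 ω) (X 0 ω) ∧ W (Y1 0 ω) (X 0 ω) ≤ v} = T ⁻¹' S := rfl
  rw [hpre, ← Measure.map_apply hTmeas hSmeas, ← hνdef, hgs S hSmeas]
  exact st18_margin1 fXY s0 s1 b M δ hG1 g hgm hgle W hW hWF hW0 u v hu huv hv

/-- Lipschitz-type bound for the distribution of the second pseudo-observation. -/
lemma st18_lip2 {Ω : Type*} [MeasurableSpace Ω] (P : Measure Ω) [IsProbabilityMeasure P]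
    (X Y1 Y2 : ℕ → Ω → ℝ) (fXY : ℝ → ℝ → ℝ → ℝ) (s0 s1 b M δ : ℝ)
    (hG1 : CondG1T fXY s0 s1 b M δ) (hiid : IIDLaw3 P X Y1 Y2 fXY)
    (W : ℝ → ℝ → ℝ) (hW : Measurable fun p : ℝ × ℝ => W p.1 p.2)
    (hWF : ∀ y x, x ∈ Ioo s0 s1 → W y x = F2c fXY y x)
    (hW0 : ∀ y x, x ∉ Ioo s0 s1 → W y x = 0)
    (u v : ℝ) (hu : 0 < u) (huv : u ≤ v) (hv : v < 1) :
    P {ω | u < W (Y2 0 ω) (X 0 ω) ∧ W (Y2 0 ω) (X 0 ω) ≤ v}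
      ≤ ENNReal.ofReal ((v - u) * (M * (s1 - s0))) := by
  set T : Ω → ℝ × ℝ × ℝ := fun ω => (X 0 ω, Y1 0 ω, Y2 0 ω) with hT
  have hTmeas : Measurable T :=
    (hiid.measX 0).prodMk ((hiid.measY1 0).prodMk (hiid.measY2 0))
  set ν : Measure (ℝ × ℝ × ℝ) := Measure.map T P with hνdef
  have : IsProbabilityMeasure ν := Measure.isProbabilityMeasure_map hTmeas.aemeasurable
  have hν : ν = (volume : Measure (ℝ × ℝ × ℝ)).withDensity
      (fun p => ENNReal.ofReal (fXY p.1 p.2.1 p.2.2)) := hiid.law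
  obtain ⟨g, hgm, hgle, hgs⟩ := st18_nu_repr volume ν _ hν
  have hWp : Measurable fun p : ℝ × ℝ × ℝ => W p.2.2 p.1 :=
    hW.comp ((measurable_snd.snd).prodMk measurable_fst)
  set S : Set (ℝ × ℝ × ℝ) := {p | u < W p.2.2 p.1 ∧ W p.2.2 p.1 ≤ v} with hS
  have hSmeas : MeasurableSet S :=
    (measurableSet_lt measurable_const hWp).inter (measurableSet_le hWp measurable_const)
  have hpre : {ω | u < W (Y2 0 ω) (X 0 ω) ∧ W (Y2 0 ω) (X 0 ω) ≤ v} = T ⁻¹' S := rfl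
  rw [hpre, ← Measure.map_apply hTmeas hSmeas, ← hνdef, hgs S hSmeas]
  exact st18_margin2 fXY s0 s1 b M δ hG1 g hgm hgle W hW hWF hW0 u v hu huv hv

open Classical in
/-- Deterministic bound on the difference of empirical distribution functions. -/
lemma st18_det {Ω : Type*} (X Yj : ℕ → Ω → ℝ) (F W : ℝ → ℝ → ℝ)
    (Fh : ℕ → ℝ → ℝ → Ω → ℝ) (s0 s1 : ℝ)
    (hWF : ∀ y x, x ∈ Ioo s0 s1 → W y x = F y x)
    (n : ℕ) (hn : 1 ≤ n) (ω : Ω) (γ ε η ρ : ℝ) (hη : 0 < η) (hε : 0 < ε) (hρ : 0 < ρ)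
    (h2 : ∀ i < n, X i ω ∈ Ioo s0 s1)
    (h1 : ∀ x ∈ Ioo s0 s1, ∀ y, |Fh n y x ω - F y x| ≤ η)
    (h3 : ∀ k ≤ ⌊(1 - 2*γ)/η⌋₊, (∑ i ∈ Finset.range n,
        (if |W (Yj i ω) (X i ω) - (γ + k * η)| ≤ 2*η then (1:ℝ) else 0))
        ≤ ε/2 * ((n:ℝ) * ρ)) :
    ∀ u ∈ Icc γ (1 - γ),
      |Ghat Fh X Yj n u ω - Ghat (fun _ y x _ => F y x) X Yj n u ω| ≤ ε/2 * ρ := by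
  intro u hu
  set k := ⌊(u - γ)/η⌋₊ with hk
  have hk_le : k ≤ ⌊(1 - 2*γ)/η⌋₊ := by
    apply Nat.floor_mono
    apply div_le_div_of_nonneg_right ?_ hη.le |>.trans le_rfl
    · linarith [hu.2]
  set uk := γ + k*η with huk
  have hkη : (k:ℝ) * η ≤ u - γ := by
    have h0 : (0:ℝ) ≤ (u - γ)/η := div_nonneg (by linarith [hu.1]) hη.le
    have := Nat.floor_le h0
    calc (k:ℝ) * η ≤ ((u - γ)/η) * η := by
          apply mul_le_mul_of_nonneg_right this hη.le
      _ = u - γ := by field_simp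
  have huk1 : uk ≤ u := by rw [huk]; linarith
  have huk2 : u - uk ≤ η := by
    have := Nat.lt_floor_add_one ((u - γ)/η)
    have h2' : u - γ < ((k:ℝ) + 1) * η := by
      calc u - γ = ((u - γ)/η) * η := by field_simp
        _ < ((k:ℝ) + 1) * η := by
            apply mul_lt_mul_of_pos_right ?_ hη
            exact_mod_cast this
    rw [huk]; nlinarith
  have hterm : ∀ i ∈ Finset.range n,
      |(if Fh n (Yj i ω) (X i ω) ω ≤ u then (1:ℝ) else 0)
        - (if F (Yj i ω) (X i ω) ≤ u then (1:ℝ) else 0)|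
      ≤ (if |W (Yj i ω) (X i ω) - uk| ≤ 2*η then (1:ℝ) else 0) := by
    intro i hi
    have hXi : X i ω ∈ Ioo s0 s1 := h2 i (Finset.mem_range.mp hi)
    have hWeq : W (Yj i ω) (X i ω) = F (Yj i ω) (X i ω) := hWF _ _ hXi
    have hFh : |Fh n (Yj i ω) (X i ω) ω - F (Yj i ω) (X i ω)| ≤ η :=
      h1 (X i ω) hXi (Yj i ω)
    rw [abs_le] at hFh
    by_cases hA : Fh n (Yj i ω) (X i ω) ω ≤ u <;>
      by_cases hB : F (Yj i ω) (X i ω) ≤ u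
    · simp only [if_pos hA, if_pos hB, sub_self, abs_zero]
      positivity
    · have hin : |W (Yj i ω) (X i ω) - uk| ≤ 2*η := by
        rw [hWeq, abs_le]
        push_neg at hB
        constructor <;> nlinarith
      simp only [if_pos hA, if_neg hB, if_pos hin]
      norm_num
    · have hin : |W (Yj i ω) (X i ω) - uk| ≤ 2*η := by
        rw [hWeq, abs_le]
        push_neg at hA
        constructor <;> nlinarith
      simp only [if_neg hA, if_pos hB, if_pos hin]
      norm_num
    · simp only [if_neg hA, if_neg hB, sub_self, abs_zero]
      positivity
  have hnne : (n:ℝ) ≠ 0 := by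
    have : (0:ℝ) < n := by exact_mod_cast hn
    exact this.ne'
  have hgdiff : Ghat Fh X Yj n u ω - Ghat (fun _ y x _ => F y x) X Yj n u ω
      = (n:ℝ)⁻¹ * ∑ i ∈ Finset.range n,
        ((if Fh n (Yj i ω) (X i ω) ω ≤ u then (1:ℝ) else 0)
          - (if F (Yj i ω) (X i ω) ≤ u then (1:ℝ) else 0)) := by
    rw [Ghat, Ghat, ← mul_sub, ← Finset.sum_sub_distrib]
  rw [hgdiff, abs_mul, abs_of_nonneg (by positivity : (0:ℝ) ≤ (n:ℝ)⁻¹)]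
  calc (n:ℝ)⁻¹ * |∑ i ∈ Finset.range n, _|
      ≤ (n:ℝ)⁻¹ * ∑ i ∈ Finset.range n,
          (if |W (Yj i ω) (X i ω) - uk| ≤ 2*η then (1:ℝ) else 0) := by
        apply mul_le_mul_of_nonneg_left ?_ (by positivity)
        exact (Finset.abs_sum_le_sum_abs _ _).trans (Finset.sum_le_sum hterm)
    _ ≤ (n:ℝ)⁻¹ * (ε/2 * ((n:ℝ) * ρ)) := by
        apply mul_le_mul_of_nonneg_left (h3 k hk_le) (by positivity)
    _ = ε/2 * ρ := by field_simp

open Classical in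
/-- Chebyshev bound for the count of i.i.d. indicator variables. -/
lemma st18_cheb {Ω : Type*} [MeasurableSpace Ω] (P : Measure Ω) [IsProbabilityMeasure P]
    (V : ℕ → Ω → ℝ × ℝ) (hVmeas : ∀ i, Measurable (V i))
    (hindep : iIndepFun V P)
    (hident : ∀ i, IdentDistrib (V i) (V 0) P P)
    (A : Set (ℝ × ℝ)) (hA : MeasurableSet A)
    (n : ℕ) (τ p0 : ℝ) (hp0 : (P (V 0 ⁻¹' A)).toReal ≤ p0)
    (hgap : (n:ℝ) * p0 < τ) :
    P {ω | τ < ∑ i ∈ Finset.range n, (A.indicator (fun _ => (1:ℝ)) (V i ω))}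
      ≤ ENNReal.ofReal (((n:ℝ) * p0) / (τ - (n:ℝ) * p0)^2) := by
  set φ : ℝ × ℝ → ℝ := A.indicator (fun _ => (1:ℝ)) with hφ
  have hφmeas : Measurable φ := measurable_const.indicator hA
  set ξ : ℕ → Ω → ℝ := fun i ω => φ (V i ω) with hξ
  have hξmeas : ∀ i, Measurable (ξ i) := fun i => hφmeas.comp (hVmeas i)
  have hξval : ∀ i ω, ξ i ω = 0 ∨ ξ i ω = 1 := by
    intro i ω
    by_cases h : V i ω ∈ A
    · right; simp [hξ, hφ, Set.indicator_of_mem h]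
    · left; simp [hξ, hφ, Set.indicator_of_notMem h]
  have hξL2 : ∀ i, MemLp (ξ i) 2 P := by
    intro i
    apply MemLp.of_bound (hξmeas i).aestronglyMeasurable 1
    apply ae_of_all
    intro ω
    rcases hξval i ω with h | h <;> rw [h] <;> simp
  have hident' : ∀ i, IdentDistrib (ξ i) (ξ 0) P P := fun i => (hident i).comp hφmeas
  set p : ℝ := ∫ ω, ξ 0 ω ∂P with hp
  have hp_eq : p = (P (V 0 ⁻¹' A)).toReal := by
    have h0 : ξ 0 = fun ω => Set.indicator (V 0 ⁻¹' A) (fun _ => (1:ℝ)) ω := by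
      funext ω
      by_cases h : V 0 ω ∈ A <;>
        simp [hξ, hφ, Set.indicator_apply, h, Set.mem_preimage]
    rw [hp, h0, integral_indicator_const (1:ℝ) ((hVmeas 0) hA)]
    simp [measureReal_def]
  have hpnn : 0 ≤ p := by rw [hp_eq]; exact ENNReal.toReal_nonneg
  have hpp0 : p ≤ p0 := by rw [hp_eq]; exact hp0
  have hEi : ∀ i, ∫ ω, ξ i ω ∂P = p := fun i => (hident' i).integral_eq
  set S : Ω → ℝ := ∑ i ∈ Finset.range n, ξ i with hSdef
  have hSapp : ∀ ω, S ω = ∑ i ∈ Finset.range n, ξ i ω := by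
    intro ω; rw [hSdef]; simp [Finset.sum_apply]
  have hSL2 : MemLp S 2 P := memLp_finset_sum' _ (fun i _ => hξL2 i)
  have hES : ∫ ω, S ω ∂P = (n:ℝ) * p := by
    rw [hSdef]
    have : ∫ ω, (∑ i ∈ Finset.range n, ξ i) ω ∂P
        = ∑ i ∈ Finset.range n, ∫ ω, ξ i ω ∂P := by
      simp only [Finset.sum_apply]
      exact integral_finset_sum _ (fun i _ => (hξL2 i).integrable one_le_two)
    rw [this]
    simp [hEi, Finset.sum_const, Finset.card_range, nsmul_eq_mul]
  have hξindep : iIndepFun ξ P := hindep.comp (fun _ => φ)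
    (fun _ => hφmeas)
  have hξsq : ∀ i, (ξ i)^2 = ξ i := by
    intro i; funext ω
    rcases hξval i ω with h | h <;> simp [h]
  have hVar0 : variance (ξ 0) P ≤ p := by
    rw [variance_eq_sub (hξL2 0), hξsq 0]
    simp only [← hp]
    nlinarith [sq_nonneg p]
  have hVarS : variance S P ≤ (n:ℝ) * p0 := by
    rw [hSdef, IndepFun.variance_sum (fun i _ => hξL2 i)
      (fun i _ j _ hij => hξindep.indepFun hij)]
    calc ∑ i ∈ Finset.range n, variance (ξ i) P
        = ∑ i ∈ Finset.range n, variance (ξ 0) P := by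
          apply Finset.sum_congr rfl
          intro i _
          exact (hident' i).variance_eq
      _ ≤ ∑ i ∈ Finset.range n, p := Finset.sum_le_sum (fun i _ => hVar0)
      _ = (n:ℝ) * p := by simp [Finset.sum_const, Finset.card_range, nsmul_eq_mul]
      _ ≤ (n:ℝ) * p0 := by
          apply mul_le_mul_of_nonneg_left hpp0 (Nat.cast_nonneg n)
  set c : ℝ := τ - (n:ℝ) * p0 with hc
  have hcpos : 0 < c := by rw [hc]; linarith
  have hincl : {ω | τ < ∑ i ∈ Finset.range n, (A.indicator (fun _ => (1:ℝ)) (V i ω))}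
      ⊆ {ω | c ≤ |S ω - ∫ ω', S ω' ∂P|} := by
    intro ω hω
    simp only [mem_setOf_eq] at hω ⊢
    have h1 : S ω = ∑ i ∈ Finset.range n, (A.indicator (fun _ => (1:ℝ)) (V i ω)) := hSapp ω
    rw [hES]
    have hnp : (n:ℝ) * p ≤ (n:ℝ) * p0 :=
      mul_le_mul_of_nonneg_left hpp0 (Nat.cast_nonneg n)
    have : c ≤ S ω - (n:ℝ) * p := by rw [h1, hc]; linarith
    exact this.trans (le_abs_self _)
  calc P {ω | τ < ∑ i ∈ Finset.range n, (A.indicator (fun _ => (1:ℝ)) (V i ω))}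
      ≤ P {ω | c ≤ |S ω - ∫ ω', S ω' ∂P|} := measure_mono hincl
    _ ≤ ENNReal.ofReal (variance S P / c^2) := meas_ge_le_variance_div_sq hSL2 hcpos
    _ ≤ ENNReal.ofReal (((n:ℝ) * p0) / (τ - (n:ℝ) * p0)^2) := by
        apply ENNReal.ofReal_le_ofReal
        rw [hc]
        apply div_le_div_of_nonneg_right hVarS ?_ |>.trans le_rfl
        positivity

set_option maxHeartbeats 2000000 in
open Classical in
/-- Master lemma: empirical process part of Statement 18, for one margin. -/
lemma st18_master {Ω : Type*} [MeasurableSpace Ω] (P : Measure Ω) [IsProbabilityMeasure P]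
    (X Yj : ℕ → Ω → ℝ) (F : ℝ → ℝ → ℝ) (Fh : ℕ → ℝ → ℝ → Ω → ℝ)
    (s0 s1 L : ℝ) (hL : 0 < L)
    (W : ℝ → ℝ → ℝ) (hW : Measurable fun p : ℝ × ℝ => W p.1 p.2)
    (hWF : ∀ y x, x ∈ Ioo s0 s1 → W y x = F y x)
    (hXin : ∀ i, P {ω | X i ω ∉ Ioo s0 s1} = 0)
    (hpair_meas : ∀ i : ℕ, Measurable fun ω => (Yj i ω, X i ω))
    (hpair_indep : iIndepFun (fun i ω => (Yj i ω, X i ω)) P)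
    (hpair_ident : ∀ i, IdentDistrib (fun ω => (Yj i ω, X i ω))
      (fun ω => (Yj 0 ω, X 0 ω)) P P)
    (hLip : ∀ u v : ℝ, 0 < u → u ≤ v → v < 1 →
        P {ω | u < W (Yj 0 ω) (X 0 ω) ∧ W (Yj 0 ω) (X 0 ω) ≤ v}
          ≤ ENNReal.ofReal ((v - u) * L))
    (hH2 : CondH2 P s0 s1 F Fh)
    (γ : ℝ) (hγ : γ ∈ Ioo (0:ℝ) (1/2)) (ε : ℝ) (hε : 0 < ε) :
    Tendsto (fun n : ℕ => P {ω | ∃ u ∈ Icc γ (1 - γ),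
        ε * (n:ℝ) ^ (-(1/4) : ℝ) <
          |Ghat Fh X Yj n u ω - Ghat (fun _ y x _ => F y x) X Yj n u ω|}) atTop (𝓝 0) := by
  obtain ⟨hγ0, hγhalf⟩ := hγ
  have hmaxpos : 0 < max L 1 := lt_of_lt_of_le one_pos (le_max_right L 1)
  set ε' : ℝ := ε / (40 * max L 1) with hε'def
  have hε'pos : 0 < ε' := by rw [hε'def]; positivity
  have h5ε'L : 5 * ε' * L ≤ ε / 8 := by
    have hLle : L ≤ max L 1 := le_max_left _ _
    have h1 : 5 * ε' * L = ε * L / (8 * max L 1) := by rw [hε'def]; ring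
    rw [h1]
    have h2 : ε * L / (8 * max L 1) ≤ ε * max L 1 / (8 * max L 1) := by gcongr
    refine h2.trans (le_of_eq ?_)
    field_simp
  set ρ : ℕ → ℝ := fun n => (n:ℝ) ^ (-(1/4) : ℝ) with hρdef
  have hρpos : ∀ n : ℕ, 1 ≤ n → 0 < ρ n := by
    intro n hn
    apply Real.rpow_pos_of_pos
    exact_mod_cast hn
  set η : ℕ → ℝ := fun n => ε' * ρ n with hηdef
  have hηpos : ∀ n : ℕ, 1 ≤ n → 0 < η n := fun n hn => mul_pos hε'pos (hρpos n hn)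
  set K : ℕ → ℕ := fun n => ⌊(1 - 2*γ)/(η n)⌋₊ with hKdef
  set A : ℕ → ℕ → Set (ℝ × ℝ) :=
    fun n k => {q : ℝ × ℝ | |W q.1 q.2 - (γ + (k:ℝ) * η n)| ≤ 2 * η n} with hAdef
  have hAmeas : ∀ n k, MeasurableSet (A n k) := by
    intro n k
    exact measurableSet_le ((hW.sub measurable_const).abs) measurable_const
  set H2ev : ℕ → Set Ω := fun n => {ω | ∃ x ∈ Ioo s0 s1, ∃ y : ℝ,
    ε' * (n:ℝ) ^ (-(1/4) : ℝ) < |Fh n y x ω - F y x|} with hH2evdef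
  set Xev : ℕ → Set Ω := fun n => ⋃ i ∈ Finset.range n, {ω | X i ω ∉ Ioo s0 s1} with hXevdef
  set Dev : ℕ → ℕ → Set Ω := fun n k => {ω | ε/2 * ((n:ℝ) * ρ n) <
    ∑ i ∈ Finset.range n, (A n k).indicator (fun _ => (1:ℝ)) (Yj i ω, X i ω)} with hDevdef
  set bad : ℕ → Set Ω := fun n => {ω | ∃ u ∈ Icc γ (1 - γ),
    ε * (n:ℝ) ^ (-(1/4) : ℝ) <
      |Ghat Fh X Yj n u ω - Ghat (fun _ y x _ => F y x) X Yj n u ω|} with hbaddef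
  -- the inclusion
  have hincl : ∀ n : ℕ, 1 ≤ n →
      bad n ⊆ H2ev n ∪ (Xev n ∪ ⋃ k ∈ Finset.range (K n + 1), Dev n k) := by
    intro n hn ω hω
    by_cases hH : ω ∈ H2ev n
    · exact Or.inl hH
    by_cases hX : ω ∈ Xev n
    · exact Or.inr (Or.inl hX)
    by_cases hD : ∃ k ∈ Finset.range (K n + 1), ω ∈ Dev n k
    · obtain ⟨k, hk1, hk2⟩ := hD
      exact Or.inr (Or.inr (mem_biUnion hk1 hk2))
    exfalso
    push_neg at hD
    obtain ⟨u, hu, hlt⟩ := hω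
    have h2' : ∀ i < n, X i ω ∈ Ioo s0 s1 := by
      intro i hi
      by_contra hni
      exact hX (mem_biUnion (Finset.mem_range.mpr hi) hni)
    have h1' : ∀ x ∈ Ioo s0 s1, ∀ y : ℝ, |Fh n y x ω - F y x| ≤ η n := by
      intro x hx y
      by_contra hgt
      push_neg at hgt
      exact hH ⟨x, hx, y, hgt⟩
    have h3' : ∀ k ≤ ⌊(1 - 2*γ)/(η n)⌋₊, (∑ i ∈ Finset.range n,
        (if |W (Yj i ω) (X i ω) - (γ + (k:ℝ) * η n)| ≤ 2*(η n) then (1:ℝ) else 0))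
        ≤ ε/2 * ((n:ℝ) * ρ n) := by
      intro k hk
      have hnd := hD k (Finset.mem_range.mpr (Nat.lt_succ_of_le hk))
      rw [hDevdef] at hnd
      simp only [mem_setOf_eq, not_lt] at hnd
      refine le_trans (le_of_eq ?_) hnd
      apply Finset.sum_congr rfl
      intro i _
      rw [hAdef]
      by_cases hmem : |W (Yj i ω) (X i ω) - (γ + (k:ℝ) * η n)| ≤ 2*(η n)
      · rw [if_pos hmem, Set.indicator_of_mem (by exact hmem)]
      · rw [if_neg hmem, Set.indicator_of_notMem (by exact hmem)]
    have hdet := st18_det X Yj F W Fh s0 s1 hWF n hn ω γ ε (η n) (ρ n)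
      (hηpos n hn) hε (hρpos n hn) h2' h1' h3' u hu
    have hρp := hρpos n hn
    have : ε * ρ n < ε/2 * ρ n := lt_of_lt_of_le hlt hdet
    nlinarith
  -- per-grid-point Chebyshev bound
  have hcheb : ∀ n : ℕ, 1 ≤ n → η n < γ/3 → ∀ k ≤ K n,
      P (Dev n k) ≤ ENNReal.ofReal (8 / (9 * ε * ((n:ℝ) * ρ n))) := by
    intro n hn hη3 k hk
    have hρp := hρpos n hn
    have hηp := hηpos n hn
    have hnp : (0:ℝ) < n := by exact_mod_cast hn
    set uk : ℝ := γ + (k:ℝ) * η n with hukdef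
    have hkle : (k:ℝ) * η n ≤ 1 - 2*γ := by
      have h0 : (0:ℝ) ≤ (1 - 2*γ)/(η n) := div_nonneg (by linarith) hηp.le
      have h1 : (k:ℝ) ≤ (1 - 2*γ)/(η n) := by
        calc (k:ℝ) ≤ (⌊(1 - 2*γ)/(η n)⌋₊ : ℝ) := by exact_mod_cast hk
          _ ≤ (1 - 2*γ)/(η n) := Nat.floor_le h0
      calc (k:ℝ) * η n ≤ ((1 - 2*γ)/(η n)) * η n :=
            mul_le_mul_of_nonneg_right h1 hηp.le
        _ = 1 - 2*γ := by field_simp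
    have hknn : (0:ℝ) ≤ (k:ℝ) * η n := by positivity
    -- Lipschitz bound on the probability of the window
    set V : ℕ → Ω → ℝ × ℝ := fun i ω => (Yj i ω, X i ω) with hVdef
    have hpre : V 0 ⁻¹' (A n k) ⊆
        {ω | uk - 3*(η n) < W (Yj 0 ω) (X 0 ω) ∧ W (Yj 0 ω) (X 0 ω) ≤ uk + 2*(η n)} := by
      intro ω hω
      simp only [hVdef, hAdef, mem_preimage, mem_setOf_eq, abs_le] at hω ⊢
      constructor <;> [linarith [hω.1]; linarith [hω.2]]
    have hlip := hLip (uk - 3*(η n)) (uk + 2*(η n))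
      (by rw [hukdef]; nlinarith)
      (by nlinarith)
      (by rw [hukdef]; nlinarith)
    have hPA : P (V 0 ⁻¹' (A n k)) ≤ ENNReal.ofReal (5 * η n * L) := by
      refine le_trans (measure_mono hpre) (le_trans hlip ?_)
      apply ENNReal.ofReal_le_ofReal
      apply le_of_eq; ring
    have hp0 : (P (V 0 ⁻¹' (A n k))).toReal ≤ 5 * η n * L := by
      apply ENNReal.toReal_le_of_le_ofReal (by positivity) hPA
    have hX : (0:ℝ) < (n:ℝ) * ρ n := mul_pos hnp hρp
    have hXne : (n:ℝ) * ρ n ≠ 0 := hX.ne'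
    have hεne : ε ≠ 0 := hε.ne'
    have hηLnn : (0:ℝ) ≤ 5 * η n * L := by nlinarith [hηp.le, hL.le]
    have hnum : (n:ℝ) * (5 * η n * L) ≤ ε/8 * ((n:ℝ) * ρ n) := by
      have h1 : (n:ℝ) * (5 * η n * L) = (5 * ε' * L) * ((n:ℝ) * ρ n) := by
        rw [hηdef]; ring
      rw [h1]
      exact mul_le_mul_of_nonneg_right h5ε'L hX.le
    have hgap : (n:ℝ) * (5 * η n * L) < ε/2 * ((n:ℝ) * ρ n) := by
      refine lt_of_le_of_lt hnum ?_
      have : ε/8 < ε/2 := by linarith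
      exact mul_lt_mul_of_pos_right this hX
    have hbnd := st18_cheb P V (fun i => hpair_meas i) hpair_indep
      (fun i => hpair_ident i) (A n k) (hAmeas n k) n (ε/2 * ((n:ℝ) * ρ n))
      (5 * η n * L) hp0 hgap
    refine le_trans hbnd ?_
    apply ENNReal.ofReal_le_ofReal
    have hden : (3*ε/8) * ((n:ℝ) * ρ n) ≤ ε/2 * ((n:ℝ) * ρ n) - (n:ℝ) * (5 * η n * L) := by
      linarith [hnum]
    have hdenpos : (0:ℝ) < (3*ε/8) * ((n:ℝ) * ρ n) := by
      have h38 : (0:ℝ) < 3*ε/8 := by linarith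
      exact mul_pos h38 hX
    have hnumnn : (0:ℝ) ≤ (n:ℝ) * (5 * η n * L) := mul_nonneg hnp.le hηLnn
    have hnum' : (n:ℝ) * (5 * η n * L) ≤ ε/8 * ((n:ℝ) * ρ n) := hnum
    calc (n:ℝ) * (5 * η n * L) / (ε/2 * ((n:ℝ) * ρ n) - (n:ℝ) * (5 * η n * L))^2
        ≤ (ε/8 * ((n:ℝ) * ρ n)) / ((3*ε/8) * ((n:ℝ) * ρ n))^2 := by
          apply div_le_div₀ ?_ hnum' ?_ ?_
          · have : (0:ℝ) < ε/8 := by linarith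
            exact (mul_pos this hX).le
          · exact pow_pos hdenpos 2
          · exact pow_le_pow_left₀ hdenpos.le hden 2
      _ = 8 / (9 * ε * ((n:ℝ) * ρ n)) := by
          field_simp
          ring
    -- end hcheb
  -- the real bound sequence
  set C1 : ℝ := (1 - 2*γ) * 8 / (9 * ε * ε') with hC1
  set C2 : ℝ := 8 / (9 * ε) with hC2
  set B : ℕ → ℝ := fun n => ((1 - 2*γ)/(η n) + 1) * (8 / (9 * ε * ((n:ℝ) * ρ n))) with hBdef
  have hA4 : ∀ n : ℕ, 1 ≤ n → (n:ℝ) * (ρ n)^4 = 1 := by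
    intro n hn
    have hnp : (0:ℝ) < n := by exact_mod_cast hn
    have h1 : (ρ n)^4 = (n:ℝ) ^ ((-(1/4) : ℝ) * 4) := by
      rw [hρdef]
      rw [← Real.rpow_natCast ((n:ℝ) ^ (-(1/4) : ℝ)) 4, ← Real.rpow_mul hnp.le]
      norm_num
    rw [h1]
    have : (-(1/4) : ℝ) * 4 = -1 := by norm_num
    rw [this, Real.rpow_neg_one]
    field_simp
  have hBeq : ∀ᶠ n : ℕ in atTop, B n = C1 * (ρ n)^2 + C2 * (ρ n)^3 := by
    filter_upwards [eventually_ge_atTop 1] with n hn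
    have hρp := hρpos n hn
    have hn4 : (n:ℝ) = ((ρ n)^4)⁻¹ :=
      eq_inv_of_mul_eq_one_left (by linear_combination hA4 n hn)
    rw [hBdef]
    simp only
    rw [hηdef]
    simp only
    rw [hn4, hC1, hC2]
    field_simp
  have hρ0 : Tendsto ρ atTop (𝓝 0) := by
    rw [hρdef]
    have h1 : Tendsto (fun x : ℝ => x ^ (-(1/4) : ℝ)) atTop (𝓝 0) := by
      have := tendsto_rpow_neg_atTop (by norm_num : (0:ℝ) < 1/4)
      simpa using this
    exact h1.comp tendsto_natCast_atTop_atTop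
  have hB0 : Tendsto B atTop (𝓝 0) := by
    have h1 : Tendsto (fun n => C1 * (ρ n)^2 + C2 * (ρ n)^3) atTop (𝓝 0) := by
      have h2 : Tendsto (fun n => (ρ n)^2) atTop (𝓝 0) := by
        simpa using hρ0.pow 2
      have h3 : Tendsto (fun n => (ρ n)^3) atTop (𝓝 0) := by
        simpa using hρ0.pow 3
      simpa using (h2.const_mul C1).add (h3.const_mul C2)
    have hBeq' : (fun n => C1 * (ρ n)^2 + C2 * (ρ n)^3) =ᶠ[atTop] B := by
      filter_upwards [hBeq] with n h
      exact h.symm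
    exact h1.congr' hBeq'
  -- eventually the measure bound holds
  have hηtend : Tendsto η atTop (𝓝 0) := by
    have h := hρ0.const_mul ε'
    rw [mul_zero] at h
    exact h
  have hηsmall : ∀ᶠ n : ℕ in atTop, η n < γ/3 :=
    hηtend.eventually_lt_const (by positivity)
  have hmain : ∀ᶠ n : ℕ in atTop,
      P (bad n) ≤ P (H2ev n) + ENNReal.ofReal (B n) := by
    filter_upwards [eventually_ge_atTop 1, hηsmall] with n hn hη3
    have hρp := hρpos n hn
    have hηp := hηpos n hn
    have hXev0 : P (Xev n) = 0 := by
      apply le_antisymm ?_ zero_le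
      refine le_trans (measure_biUnion_finset_le _ _) ?_
      exact le_of_eq (Finset.sum_eq_zero fun i _ => hXin i)
    have hDevsum : P (⋃ k ∈ Finset.range (K n + 1), Dev n k)
        ≤ ENNReal.ofReal (B n) := by
      refine le_trans (measure_biUnion_finset_le _ _) ?_
      have h1 : ∀ k ∈ Finset.range (K n + 1),
          P (Dev n k) ≤ ENNReal.ofReal (8 / (9 * ε * ((n:ℝ) * ρ n))) := by
        intro k hk
        exact hcheb n hn hη3 k (Nat.lt_succ_iff.mp (Finset.mem_range.mp hk))
      refine le_trans (Finset.sum_le_card_nsmul _ _ _ h1) ?_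
      rw [Finset.card_range, nsmul_eq_mul]
      have h2 : ((K n + 1 : ℕ) : ℝ≥0∞) = ENNReal.ofReal ((K n : ℝ) + 1) := by
        rw [← ENNReal.ofReal_natCast (K n + 1)]
        congr 1
        push_cast
        ring
      rw [h2, ← ENNReal.ofReal_mul (by positivity)]
      apply ENNReal.ofReal_le_ofReal
      rw [hBdef]
      apply mul_le_mul_of_nonneg_right ?_ (by positivity)
      have h3 : (K n : ℝ) ≤ (1 - 2*γ)/(η n) := by
        rw [hKdef]
        exact Nat.floor_le (div_nonneg (by linarith) hηp.le)
      linarith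
    calc P (bad n)
        ≤ P (H2ev n ∪ (Xev n ∪ ⋃ k ∈ Finset.range (K n + 1), Dev n k)) :=
          measure_mono (hincl n hn)
      _ ≤ P (H2ev n) + P (Xev n ∪ ⋃ k ∈ Finset.range (K n + 1), Dev n k) :=
          measure_union_le _ _
      _ ≤ P (H2ev n) + (P (Xev n) + P (⋃ k ∈ Finset.range (K n + 1), Dev n k)) :=
          add_le_add le_rfl (measure_union_le _ _)
      _ ≤ P (H2ev n) + ENNReal.ofReal (B n) := by
          rw [hXev0, zero_add]
          exact add_le_add le_rfl hDevsum
  -- conclude by squeezing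
  have hH2tend : Tendsto (fun n => P (H2ev n)) atTop (𝓝 0) := hH2 ε' hε'pos
  have hofReal : Tendsto (fun n => ENNReal.ofReal (B n)) atTop (𝓝 0) := by
    have := (ENNReal.continuous_ofReal.tendsto 0).comp hB0
    rwa [ENNReal.ofReal_zero] at this
  have hsum : Tendsto (fun n => P (H2ev n) + ENNReal.ofReal (B n)) atTop (𝓝 0) := by
    have := hH2tend.add hofReal
    simpa using this
  apply tendsto_of_tendsto_of_tendsto_of_le_of_le' tendsto_const_nhds hsum
  · exact Filter.Eventually.of_forall (fun n => zero_le)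
  · exact hmain

open Classical in
/-- Measurable extension of a conditional margin by `0` off the support. -/
lemma st18_W_meas (fXY : ℝ → ℝ → ℝ → ℝ) (s0 s1 : ℝ) (Fc : ℝ → ℝ → ℝ)
    (hcont : ContinuousOn (fun p : ℝ × ℝ => Fc p.1 p.2) ((univ : Set ℝ) ×ˢ Ioo s0 s1)) :
    Measurable fun p : ℝ × ℝ =>
      (fun y x => if (y, x) ∈ (univ : Set ℝ) ×ˢ Ioo s0 s1 then Fc y x else 0) p.1 p.2 := by
  have hU : IsOpen ((univ : Set ℝ) ×ˢ Ioo s0 s1) := isOpen_univ.prod isOpen_Ioo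
  have h := st18_meas_if hU hcont
  convert h using 1
  funext p
  rcases p with ⟨y, x⟩
  by_cases hmem : (y, x) ∈ (univ : Set ℝ) ×ˢ Ioo s0 s1 <;> simp [hmem]

end St18Aux

/-- Fact 3: under (G1), (H1), (H2), (H3), for each margin
`j` and each `γ ∈ (0,1/2)`,
`sup_{u ∈ [γ,1-γ]} |Ĝ_{n,j}(u) - Ĝ^{(or)}_{n,j}(u)| = o_P(n^{-1/4})`. -/
theorem stmt18
    {Ω : Type*} [MeasurableSpace Ω] (P : Measure Ω) [IsProbabilityMeasure P]
    (X Y1 Y2 : ℕ → Ω → ℝ) (fXY : ℝ → ℝ → ℝ → ℝ) (s0 s1 b M δ : ℝ)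
    (hG1 : CondG1T fXY s0 s1 b M δ) (hiid : IIDLaw3 P X Y1 Y2 fXY)
    (Fh1 Fh2 : ℕ → ℝ → ℝ → Ω → ℝ)
    (hFh1meas : ∀ n, Measurable fun p : ℝ × ℝ × Ω => Fh1 n p.1 p.2.1 p.2.2)
    (hFh2meas : ∀ n, Measurable fun p : ℝ × ℝ × Ω => Fh2 n p.1 p.2.1 p.2.2)
    (hH1₁ : CondH1 P s0 s1 (F1c fXY) Fh1) (hH1₂ : CondH1 P s0 s1 (F2c fXY) Fh2)
    (hH2₁ : CondH2 P s0 s1 (F1c fXY) Fh1) (hH2₂ : CondH2 P s0 s1 (F2c fXY) Fh2)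
    (hH3₁ : CondH3 P s0 s1 Fh1) (hH3₂ : CondH3 P s0 s1 Fh2) :
    ∀ γ ∈ Set.Ioo (0 : ℝ) (1 / 2), ∀ ε > (0 : ℝ),
      Tendsto (fun n : ℕ => P {ω | ∃ u ∈ Set.Icc γ (1 - γ),
          ε * (n : ℝ) ^ (-(1 / 4) : ℝ) <
            |Ghat Fh1 X Y1 n u ω - Ghat (fun _ y x _ => F1c fXY y x) X Y1 n u ω|})
        atTop (𝓝 0) ∧
      Tendsto (fun n : ℕ => P {ω | ∃ u ∈ Set.Icc γ (1 - γ),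
          ε * (n : ℝ) ^ (-(1 / 4) : ℝ) <
            |Ghat Fh2 X Y2 n u ω - Ghat (fun _ y x _ => F2c fXY y x) X Y2 n u ω|})
        atTop (𝓝 0) := by
  intro γ hγ ε hε
  have hs01 : s0 < s1 := hG1.hs
  set L : ℝ := M * (s1 - s0) with hLdef
  have hL : 0 < L := mul_pos hG1.hM (by linarith)
  -- a.s. the covariates are in the support
  have hXin : ∀ i, P {ω | X i ω ∉ Set.Ioo s0 s1} = 0 := by
    have h0 : P {ω | X 0 ω ∉ Set.Ioo s0 s1} = 0 := by
      set T : Ω → ℝ × ℝ × ℝ := fun ω => (X 0 ω, Y1 0 ω, Y2 0 ω) with hT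
      have hTmeas : Measurable T :=
        (hiid.measX 0).prodMk ((hiid.measY1 0).prodMk (hiid.measY2 0))
      set S0 : Set (ℝ × ℝ × ℝ) := {p | p.1 ∉ Set.Ioo s0 s1} with hS0
      have hS0meas : MeasurableSet S0 := (measurableSet_Ioo.preimage measurable_fst).compl
      have hpre : {ω | X 0 ω ∉ Set.Ioo s0 s1} = T ⁻¹' S0 := rfl
      rw [hpre, ← Measure.map_apply hTmeas hS0meas, hiid.law,
        withDensity_apply _ hS0meas, ← lintegral_indicator hS0meas]
      have hzero : S0.indicator (fun p : ℝ × ℝ × ℝ =>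
          ENNReal.ofReal (fXY p.1 p.2.1 p.2.2)) = fun _ => 0 := by
        funext p
        by_cases hp : p ∈ S0
        · rw [Set.indicator_of_mem hp, hG1.supp p.1 p.2.1 p.2.2 hp]
          simp
        · rw [Set.indicator_of_notMem hp]
      rw [hzero]
      simp
    intro i
    have hid : IdentDistrib (X i) (X 0) P P :=
      (hiid.ident i).comp measurable_fst
    have h1 : {ω | X i ω ∉ Set.Ioo s0 s1} = X i ⁻¹' (Set.Ioo s0 s1)ᶜ := rfl
    have h2 : {ω | X 0 ω ∉ Set.Ioo s0 s1} = X 0 ⁻¹' (Set.Ioo s0 s1)ᶜ := rfl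
    rw [h1, hid.measure_mem_eq measurableSet_Ioo.compl, ← h2, h0]
  constructor
  · -- first margin
    set W : ℝ → ℝ → ℝ := fun y x =>
      if (y, x) ∈ (univ : Set ℝ) ×ˢ Ioo s0 s1 then F1c fXY y x else 0 with hWdef
    have hWmeas : Measurable fun p : ℝ × ℝ => W p.1 p.2 :=
      st18_W_meas fXY s0 s1 (F1c fXY) hG1.F1reg.1.continuousOn
    have hWF : ∀ y x, x ∈ Ioo s0 s1 → W y x = F1c fXY y x := by
      intro y x hx
      rw [hWdef]
      simp only
      rw [if_pos (show (y, x) ∈ (univ : Set ℝ) ×ˢ Ioo s0 s1 from ⟨mem_univ _, hx⟩)]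
    have hW0 : ∀ y x, x ∉ Ioo s0 s1 → W y x = 0 := by
      intro y x hx
      rw [hWdef]
      simp only
      rw [if_neg (fun hmem => hx hmem.2)]
    have hpair_meas : ∀ i : ℕ, Measurable fun ω => (Y1 i ω, X i ω) :=
      fun i => (hiid.measY1 i).prodMk (hiid.measX i)
    have hpair_indep : iIndepFun
        (fun i ω => (Y1 i ω, X i ω)) P :=
      hiid.indep.comp (fun _ => fun p : ℝ × ℝ × ℝ => (p.2.1, p.1))
        (fun _ => (measurable_snd.fst).prodMk measurable_fst)
    have hpair_ident : ∀ i, IdentDistrib (fun ω => (Y1 i ω, X i ω))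
        (fun ω => (Y1 0 ω, X 0 ω)) P P :=
      fun i => (hiid.ident i).comp ((measurable_snd.fst).prodMk measurable_fst)
    have hLip : ∀ u v : ℝ, 0 < u → u ≤ v → v < 1 →
        P {ω | u < W (Y1 0 ω) (X 0 ω) ∧ W (Y1 0 ω) (X 0 ω) ≤ v}
          ≤ ENNReal.ofReal ((v - u) * L) := by
      intro u v hu huv hv
      exact st18_lip1 P X Y1 Y2 fXY s0 s1 b M δ hG1 hiid W hWmeas hWF hW0 u v hu huv hv
    exact st18_master P X Y1 (F1c fXY) Fh1 s0 s1 L hL W hWmeas hWF hXin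
      hpair_meas hpair_indep hpair_ident hLip hH2₁ γ hγ ε hε
  · -- second margin
    set W : ℝ → ℝ → ℝ := fun y x =>
      if (y, x) ∈ (univ : Set ℝ) ×ˢ Ioo s0 s1 then F2c fXY y x else 0 with hWdef
    have hWmeas : Measurable fun p : ℝ × ℝ => W p.1 p.2 :=
      st18_W_meas fXY s0 s1 (F2c fXY) hG1.F2reg.1.continuousOn
    have hWF : ∀ y x, x ∈ Ioo s0 s1 → W y x = F2c fXY y x := by
      intro y x hx
      rw [hWdef]
      simp only
      rw [if_pos (show (y, x) ∈ (univ : Set ℝ) ×ˢ Ioo s0 s1 from ⟨mem_univ _, hx⟩)]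
    have hW0 : ∀ y x, x ∉ Ioo s0 s1 → W y x = 0 := by
      intro y x hx
      rw [hWdef]
      simp only
      rw [if_neg (fun hmem => hx hmem.2)]
    have hpair_meas : ∀ i : ℕ, Measurable fun ω => (Y2 i ω, X i ω) :=
      fun i => (hiid.measY2 i).prodMk (hiid.measX i)
    have hpair_indep : iIndepFun
        (fun i ω => (Y2 i ω, X i ω)) P :=
      hiid.indep.comp (fun _ => fun p : ℝ × ℝ × ℝ => (p.2.2, p.1))
        (fun _ => (measurable_snd.snd).prodMk measurable_fst)
    have hpair_ident : ∀ i, IdentDistrib (fun ω => (Y2 i ω, X i ω))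
        (fun ω => (Y2 0 ω, X 0 ω)) P P :=
      fun i => (hiid.ident i).comp ((measurable_snd.snd).prodMk measurable_fst)
    have hLip : ∀ u v : ℝ, 0 < u → u ≤ v → v < 1 →
        P {ω | u < W (Y2 0 ω) (X 0 ω) ∧ W (Y2 0 ω) (X 0 ω) ≤ v}
          ≤ ENNReal.ofReal ((v - u) * L) := by
      intro u v hu huv hv
      exact st18_lip2 P X Y1 Y2 fXY s0 s1 b M δ hG1 hiid W hWmeas hWF hW0 u v hu huv hv
    exact st18_master P X Y2 (F2c fXY) Fh2 s0 s1 L hL W hWmeas hWF hXin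
      hpair_meas hpair_indep hpair_ident hLip hH2₂ γ hγ ε hε
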